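/- Let I and J be ideals on ω with J ≤_KB I (Katětov–Blass below). If Player II has a winning strategy in the tallness game with respect to J, then Player II has a winning strategy in the tallness game with respect to I. -/

import Mathlib

open Cardinal

/-- `I` is an ideal on `ω` (containing all finite sets, proper). -/
def IsIdealOmega (I : Set (Set ℕ)) : Prop :=
  (∀ A ∈ I, ∀ B ⊆ A, B ∈ I) ∧ (∀ A ∈ I, ∀ B ∈ I, A ∪ B ∈ I) ∧
  (∀ A : Set ℕ, A.Finite → A ∈ I) ∧ Set.univ ∉ I

/-- Player II wins a play of the tallness game with respect to `I`. -/
def TallIIWins (I : Set (Set ℕ)) (n : ℕ → ℕ) (i : ℕ → Bool) : Prop :=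
  {m | ∃ k, i k = true ∧ n k = m}.Infinite ∧ {m | ∃ k, i k = true ∧ n k = m} ∈ I

/-- Player II has a winning strategy in the tallness game with respect to `I`. -/
def TallIIWinStrat (I : Set (Set ℕ)) : Prop :=
  ∃ τ : List ℕ → Bool, ∀ n : ℕ → ℕ, StrictMono n →
    TallIIWins I n (fun k => τ ((List.range (k + 1)).map n))

/-- `J ≤_KB I`: there is a finite-to-one `f : ℕ → ℕ` with `f ⁻¹' A ∈ I` for all `A ∈ J`. -/
def KBBelow (J I : Set (Set ℕ)) : Prop :=
  ∃ f : ℕ → ℕ, (∀ m, (f ⁻¹' {m}).Finite) ∧ ∀ A ∈ J, f ⁻¹' A ∈ I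

/-- The list of "record" `f`-values along a list. -/
def recVals (f : ℕ → ℕ) (l : List ℕ) : List ℕ :=
  l.foldl (fun acc x => if acc.all (fun y => decide (y < f x)) then acc ++ [f x] else acc) []

theorem recVals_append (f : ℕ → ℕ) (l : List ℕ) (x : ℕ) :
    recVals f (l ++ [x]) =
      if (recVals f l).all (fun y => decide (y < f x)) then recVals f l ++ [f x]
      else recVals f l := by
  unfold recVals
  rw [List.foldl_append]
  rfl

theorem stmt14 (I J : Set (Set ℕ)) (hI : IsIdealOmega I) (hJ : IsIdealOmega J)
    (hKB : KBBelow J I) (h : TallIIWinStrat J) : TallIIWinStrat I := by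
  obtain ⟨f, hf1, hf2⟩ := hKB
  obtain ⟨τ, hτ⟩ := h
  refine ⟨fun l => match l.getLast? with
    | none => false
    | some x => if (recVals f l.dropLast).all (fun y => decide (y < f x)) then
        τ (recVals f l.dropLast ++ [f x]) else false, ?_⟩
  intro n hn
  set g : ℕ → ℕ := fun k => f (n k) with hg
  set p : ℕ → Prop := fun k => ∀ i < k, g i < g k with hp
  have hgu : ∀ M : ℕ, ∃ t, M < g t := by
    intro M
    by_contra hc
    push_neg at hc
    have hfin : {x : ℕ | f x ≤ M}.Finite := by
      apply Set.Finite.subset (Set.Finite.biUnion (Set.finite_Iic M) (fun m _ => hf1 m))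
      intro x hx
      exact Set.mem_biUnion hx rfl
    exact (Set.infinite_range_of_injective hn.injective)
      (hfin.subset (by rintro x ⟨k, rfl⟩; exact hc k))
  have hR : (setOf p).Infinite := by
    apply Set.infinite_of_forall_exists_gt
    intro a
    set B := Finset.sup (Finset.range (a + 1)) g with hB
    obtain ⟨t, ht⟩ := hgu B
    have hex : ∃ t, B < g t := ⟨t, ht⟩
    set t0 := Nat.find hex with ht0
    have ht0B : B < g t0 := Nat.find_spec hex
    have hle : ∀ i ≤ a, g i ≤ B := fun i hi =>
      Finset.le_sup (Finset.mem_range.2 (Nat.lt_succ_of_le hi))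
    have hta : a < t0 := by
      by_contra hc
      push_neg at hc
      exact absurd (hle t0 hc) (not_le.2 ht0B)
    refine ⟨t0, ?_, hta⟩
    intro i hi
    rcases le_or_gt i a with h1 | h1
    · exact lt_of_le_of_lt (hle i h1) ht0B
    · exact lt_of_le_of_lt (not_lt.1 (Nat.find_min hex hi)) ht0B
  set m : ℕ → ℕ := fun j => g (Nat.nth p j) with hm
  have hmmono : StrictMono m := by
    intro j j' hj
    exact Nat.nth_mem_of_infinite hR j' _ (Nat.nth_strictMono hR hj)
  -- every value is dominated by an earlier-or-equal record
  have aux : ∀ i : ℕ, ∃ r, p r ∧ r ≤ i ∧ g i ≤ g r := by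
    intro i
    induction i using Nat.strong_induction_on with
    | _ i ih =>
      by_cases hpi : p i
      · exact ⟨i, hpi, le_refl i, le_refl _⟩
      · have hpi2 : ¬ ∀ i' < i, g i' < g i := hpi
        push_neg at hpi2
        obtain ⟨i', hi', hgi⟩ := hpi2
        obtain ⟨r, hr1, hr2, hr3⟩ := ih i' hi'
        exact ⟨r, hr1, hr2.trans hi'.le, le_trans hgi hr3⟩
  have recChar : ∀ t, (∀ j < Nat.count p t, m j < g t) ↔ p t := by
    intro t
    constructor
    · intro hall i hit
      obtain ⟨r, hr1, hr2, hr3⟩ := aux i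
      have hcnt : Nat.count p r < Nat.count p t := by
        have : Nat.count p r + 1 = Nat.count p (r + 1) := by
          rw [Nat.count_succ, if_pos hr1]
        have h2 : Nat.count p (r + 1) ≤ Nat.count p t :=
          Nat.count_monotone p (by omega)
        omega
      have hmr : m (Nat.count p r) = g r := by
        show g (Nat.nth p (Nat.count p r)) = g r
        rw [Nat.nth_count hr1]
      exact lt_of_le_of_lt hr3 (hmr ▸ hall _ hcnt)
    · intro hpt j hj
      have hnth : Nat.nth p j < t := by
        by_contra hc
        push_neg at hc
        have := Nat.count_monotone p hc
        rw [Nat.count_nth_of_infinite hR] at this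
        omega
      exact hpt _ hnth
  have key : ∀ t, recVals f ((List.range t).map n) = (List.range (Nat.count p t)).map m := by
    intro t
    induction t with
    | zero => simp [recVals]
    | succ t ih =>
      have hsp : (List.range (t + 1)).map n = (List.range t).map n ++ [n t] := by
        rw [List.range_succ, List.map_append]; rfl
      rw [hsp, recVals_append, ih]
      have hcond : (((List.range (Nat.count p t)).map m).all
          (fun y => decide (y < f (n t))) = true) ↔ p t := by
        rw [List.all_eq_true]
        constructor
        · intro hall
          rw [← recChar]
          intro j hj
          have := hall (m j) (List.mem_map_of_mem (List.mem_range.2 hj))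
          exact of_decide_eq_true this
        · intro hpt y hy
          obtain ⟨j, hj, rfl⟩ := List.mem_map.1 hy
          exact decide_eq_true ((recChar t).2 hpt j (List.mem_range.1 hj))
      by_cases hpt : p t
      · rw [if_pos (hcond.2 hpt), Nat.count_succ, if_pos hpt, List.range_succ,
          List.map_append]
        congr 1
        have hmt : m (Nat.count p t) = g t := by
          show g (Nat.nth p (Nat.count p t)) = g t
          rw [Nat.nth_count hpt]
        show [f (n t)] = [m (Nat.count p t)]
        rw [hmt]
      · rw [if_neg (fun hc => hpt (hcond.1 hc)), Nat.count_succ, if_neg hpt, Nat.add_zero]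
  -- evaluation of the strategy
  have heval : ∀ k, (match ((List.range (k + 1)).map n).getLast? with
      | none => false
      | some x => if (recVals f ((List.range (k + 1)).map n).dropLast).all
          (fun y => decide (y < f x)) then
          τ (recVals f ((List.range (k + 1)).map n).dropLast ++ [f x]) else false) =
      if p k then τ ((List.range (Nat.count p k + 1)).map m) else false := by
    intro k
    have hsplit : (List.range (k + 1)).map n = (List.range k).map n ++ [n k] := by
      rw [List.range_succ, List.map_append]; rfl
    rw [hsplit, List.getLast?_concat, List.dropLast_concat]
    simp only []
    rw [key]
    have hcond : (((List.range (Nat.count p k)).map m).all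
        (fun y => decide (y < f (n k))) = true) ↔ p k := by
      rw [List.all_eq_true]
      constructor
      · intro hall
        rw [← recChar]
        intro j hj
        exact of_decide_eq_true (hall (m j) (List.mem_map_of_mem (List.mem_range.2 hj)))
      · intro hpt y hy
        obtain ⟨j, hj, rfl⟩ := List.mem_map.1 hy
        exact decide_eq_true ((recChar k).2 hpt j (List.mem_range.1 hj))
    by_cases hpk : p k
    · rw [if_pos (hcond.2 hpk), if_pos hpk]
      congr 1
      rw [List.range_succ, List.map_append]
      congr 1
      have hmt : m (Nat.count p k) = g k := by
        show g (Nat.nth p (Nat.count p k)) = g k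
        rw [Nat.nth_count hpk]
      show [f (n k)] = [m (Nat.count p k)]
      rw [hmt]
    · rw [if_neg (fun hc => hpk (hcond.1 hc)), if_neg hpk]
  obtain ⟨hT1, hT2⟩ := hτ m hmmono
  set T := {x | ∃ j, τ ((List.range (j + 1)).map m) = true ∧ m j = x} with hT
  set S := {x | ∃ k, (match ((List.range (k + 1)).map n).getLast? with
      | none => false
      | some y => if (recVals f ((List.range (k + 1)).map n).dropLast).all
          (fun z => decide (z < f y)) then
          τ (recVals f ((List.range (k + 1)).map n).dropLast ++ [f y]) else false) = true
      ∧ n k = x} with hS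
  have hSsub : S ⊆ f ⁻¹' T := by
    rintro x ⟨k, hk, rfl⟩
    rw [heval k] at hk
    by_cases hpk : p k
    · rw [if_pos hpk] at hk
      refine ⟨Nat.count p k, hk, ?_⟩
      show g (Nat.nth p (Nat.count p k)) = f (n k)
      rw [Nat.nth_count hpk]
    · rw [if_neg hpk] at hk; exact absurd hk (by simp)
  have hTsub : T ⊆ f '' S := by
    rintro x ⟨j, hj, rfl⟩
    set k := Nat.nth p j with hk
    have hpk : p k := Nat.nth_mem_of_infinite hR j
    have hck : Nat.count p k = j := Nat.count_nth_of_infinite hR j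
    refine ⟨n k, ⟨k, ?_, rfl⟩, rfl⟩
    rw [heval k, if_pos hpk, hck]
    exact hj
  constructor
  · intro hSfin
    exact (hT1.mono hTsub) (hSfin.image f)
  · exact hI.1 _ (hf2 T hT2) _ hSsub
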